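/- Let (M, dist) be a metric space, a ∈ [0,1], ζ ∈ (0,1), and x, y, z, p ∈ M. Suppose dist(x,p) = a·dist(x,y) and dist(p,y) = (1−a)·dist(x,y), and suppose dist(p,z) ≥ dist(x,y)/(1−ζ). Then F_{a;x,y}(z) ≥ ζ·dist(p,z)². -/
import Mathlib


/-- Conclusion of Step 2 of Lemma 3.5: far from the intermediate point `p`,
the three distances function dominates `ζ` times the squared distance to `p`. -/
theorem three_distances_far_point_zeta {M : Type*} [MetricSpace M]
    (a : ℝ) (ha : a ∈ Set.Icc (0:ℝ) 1) (ζ : ℝ) (hζ : ζ ∈ Set.Ioo (0:ℝ) 1)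
    (x y z p : M)
    (hxp : dist x p = a * dist x y) (hpy : dist p y = (1 - a) * dist x y)
    (hpz : dist p z ≥ dist x y / (1 - ζ)) :
    (1 - a) * dist x z ^ 2 + a * dist z y ^ 2 - a * (1 - a) * dist x y ^ 2
      ≥ ζ * dist p z ^ 2 := by
  obtain ⟨ha0, ha1⟩ := ha
  obtain ⟨hζ0, hζ1⟩ := hζ
  have h1 : dist p z ≤ a * dist x y + dist x z := by
    have := dist_triangle p x z
    rwa [dist_comm p x, hxp] at this
  have h2 : dist p z ≤ (1 - a) * dist x y + dist z y := by
    have := dist_triangle p y z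
    rw [hpy, dist_comm y z] at this
    linarith
  have hd : dist x y ≤ (1 - ζ) * dist p z := by
    rw [ge_iff_le, div_le_iff₀ (by linarith)] at hpz
    linarith
  have hxy0 : (0:ℝ) ≤ dist x y := dist_nonneg
  have hpz0 : (0:ℝ) ≤ dist p z := dist_nonneg
  have hxz0 : (0:ℝ) ≤ dist x z := dist_nonneg
  have hzy0 : (0:ℝ) ≤ dist z y := dist_nonneg
  have htad : a * dist x y ≤ dist p z := by nlinarith
  have htbd : (1 - a) * dist x y ≤ dist p z := by nlinarith
  have hA : (dist p z - a * dist x y) ^ 2 ≤ dist x z ^ 2 := by nlinarith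
  have hB : (dist p z - (1 - a) * dist x y) ^ 2 ≤ dist z y ^ 2 := by nlinarith
  nlinarith [sq_nonneg (1 - 2 * a), mul_nonneg hxy0 hpz0,
    mul_nonneg (mul_nonneg ha0 (by linarith : (0:ℝ) ≤ 1 - a)) (mul_nonneg hxy0 hpz0),
    mul_nonneg hpz0 hpz0, sq_nonneg (dist x y - dist p z)]
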